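/- arXiv:1302.3235 — 2 statements merged into one kernel-verified Lean document; each statement's English description precedes it below -/
import Mathlib

section
/- Let F ∈ GL⁺(3, ℝ) with polar decomposition F = U_p H and diagonalization H = V D Vᵀ, D = diag(d₁,d₂,d₃), dᵢ > 0. Then for all μ > 0 and μ_c ≥ 0, the minimum over Q ∈ SO(3) and all real matrix logarithms X with exp X = Qᵀ F of μ‖sym X‖_F² + μ_c‖skew X‖_F² equals μ‖log H‖_F² = μ Σᵢ (log dᵢ)², attained at Q = U_p. -/
open Matrix

/-- Squared Frobenius norm of a real matrix. -/
noncomputable def frobSqR (X : Matrix (Fin 3) (Fin 3) ℝ) : ℝ :=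
  ∑ i, ∑ j, |X i j| ^ 2

private lemma key3sorted (x y z m mu M : ℝ) (hm1 : m ≤ mu) (hm2 : mu ≤ M)
    (hxy : y ≤ x) (hyz : z ≤ y) (hxM : x ≤ M) (hmz : m ≤ z)
    (hsum : x + y + z = m + mu + M) :
    x^2 + y^2 + z^2 ≤ m^2 + mu^2 + M^2 := by
  have hy : y = m + mu + M - x - z := by linarith
  subst hy
  have ha : 0 ≤ M - x := by linarith
  have hc : 0 ≤ z - m := by linarith
  have h1 : 0 ≤ (M - mu) - 2*(M - x) + (z - m) := by linarith
  have h2 : 0 ≤ (mu - m) - 2*(z - m) + (M - x) := by linarith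
  nlinarith [mul_nonneg ha h1, mul_nonneg hc h2, sq_nonneg (M - x - z + m),
    sq_nonneg (M - x), sq_nonneg (z - m)]

private lemma key3 (x y z m mu M : ℝ) (hm1 : m ≤ mu) (hm2 : mu ≤ M)
    (hx1 : m ≤ x) (hx2 : x ≤ M) (hy1 : m ≤ y) (hy2 : y ≤ M)
    (hz1 : m ≤ z) (hz2 : z ≤ M)
    (hsum : x + y + z = m + mu + M) :
    x^2 + y^2 + z^2 ≤ m^2 + mu^2 + M^2 := by
  rcases le_total x y with h1 | h1 <;> rcases le_total y z with h2 | h2 <;>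
    rcases le_total x z with h3 | h3
  · linarith [key3sorted z y x m mu M hm1 hm2 h2 h1 hz2 hx1 (by linarith)]
  · linarith [key3sorted z y x m mu M hm1 hm2 h2 h1 hz2 hx1 (by linarith)]
  · linarith [key3sorted y z x m mu M hm1 hm2 h2 h3 hy2 hx1 (by linarith)]
  · linarith [key3sorted y x z m mu M hm1 hm2 h1 h3 hy2 hz1 (by linarith)]
  · linarith [key3sorted z x y m mu M hm1 hm2 h3 h1 hz2 hy1 (by linarith)]
  · linarith [key3sorted x z y m mu M hm1 hm2 h3 h2 hx2 hy1 (by linarith)]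
  · linarith [key3sorted z x y m mu M hm1 hm2 h3 h1 hz2 hy1 (by linarith)]
  · linarith [key3sorted x y z m mu M hm1 hm2 h1 h2 hx2 hz1 hsum]

private lemma sort3 (a b c : ℝ) :
    ∃ m mu M : ℝ, m ≤ mu ∧ mu ≤ M ∧ m + mu + M = a + b + c ∧
      m^2 + mu^2 + M^2 = a^2 + b^2 + c^2 ∧
      m ≤ a ∧ a ≤ M ∧ m ≤ b ∧ b ≤ M ∧ m ≤ c ∧ c ≤ M := by
  rcases le_total a b with h1 | h1 <;> rcases le_total b c with h2 | h2 <;>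
    rcases le_total a c with h3 | h3
  · exact ⟨a, b, c, by refine ⟨?_,?_,?_,?_,?_,?_,?_,?_,?_,?_⟩ <;> first | linarith | ring⟩
  · exact ⟨a, b, c, by refine ⟨?_,?_,?_,?_,?_,?_,?_,?_,?_,?_⟩ <;> first | linarith | ring⟩
  · exact ⟨a, c, b, by refine ⟨?_,?_,?_,?_,?_,?_,?_,?_,?_,?_⟩ <;> first | linarith | ring⟩
  · exact ⟨c, a, b, by refine ⟨?_,?_,?_,?_,?_,?_,?_,?_,?_,?_⟩ <;> first | linarith | ring⟩
  · exact ⟨b, a, c, by refine ⟨?_,?_,?_,?_,?_,?_,?_,?_,?_,?_⟩ <;> first | linarith | ring⟩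
  · exact ⟨b, c, a, by refine ⟨?_,?_,?_,?_,?_,?_,?_,?_,?_,?_⟩ <;> first | linarith | ring⟩
  · exact ⟨b, c, a, by refine ⟨?_,?_,?_,?_,?_,?_,?_,?_,?_,?_⟩ <;> first | linarith | ring⟩
  · exact ⟨c, b, a, by refine ⟨?_,?_,?_,?_,?_,?_,?_,?_,?_,?_⟩ <;> first | linarith | ring⟩

section Analysis

attribute [local instance] Matrix.linftyOpNormedRing Matrix.linftyOpNormedAlgebra

private abbrev M3 := Matrix (Fin 3) (Fin 3) ℝ

private def entryLM (i j : Fin 3) : M3 →ₗ[ℝ] ℝ where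
  toFun A := A i j
  map_add' _ _ := rfl
  map_smul' _ _ := rfl

private lemma hasDerivAt_entry {f : ℝ → M3} {f' : M3} {t : ℝ}
    (h : HasDerivAt f f' t) (i j : Fin 3) :
    HasDerivAt (fun s => f s i j) (f' i j) t :=
  ((entryLM i j).toContinuousLinearMap.hasFDerivAt.comp_hasDerivAt t h :)

private lemma hasDerivAt_exp_entry (X : M3) (t : ℝ) (i j : Fin 3) :
    HasDerivAt (fun s => NormedSpace.exp (s • X) i j)
      ((X * NormedSpace.exp (t • X)) i j) t :=
  hasDerivAt_entry (hasDerivAt_exp_smul_const' X t) i j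

end Analysis

section Analysis2

attribute [local instance] Matrix.linftyOpNormedRing Matrix.linftyOpNormedAlgebra

private lemma det_exp_deriv (X : M3) (t : ℝ) :
    HasDerivAt (fun s => (NormedSpace.exp (s • X)).det)
      (X.trace * (NormedSpace.exp (t • X)).det) t := by
  have h := hasDerivAt_exp_entry X t
  have T1 := ((h 0 0).mul (h 1 1)).mul (h 2 2)
  have T2 := ((h 0 0).mul (h 1 2)).mul (h 2 1)
  have T3 := ((h 0 1).mul (h 1 0)).mul (h 2 2)
  have T4 := ((h 0 1).mul (h 1 2)).mul (h 2 0)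
  have T5 := ((h 0 2).mul (h 1 0)).mul (h 2 1)
  have T6 := ((h 0 2).mul (h 1 1)).mul (h 2 0)
  have H := ((((T1.sub T2).sub T3).add T4).add T5).sub T6
  simp only [Matrix.det_fin_three]
  refine H.congr_deriv ?_
  simp only [Matrix.mul_apply, Matrix.trace_fin_three, Fin.sum_univ_three, Pi.mul_apply]
  ring

private lemma det_exp3 (X : M3) : (NormedSpace.exp X).det = Real.exp X.trace := by
  set g : ℝ → ℝ := fun s => (NormedSpace.exp (s • X)).det * Real.exp (-(X.trace) * s) with hg
  have hd : ∀ t, HasDerivAt g 0 t := by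
    intro t
    have h2 : HasDerivAt (fun s : ℝ => Real.exp (-(X.trace) * s))
        (Real.exp (-(X.trace) * t) * (-(X.trace) * 1)) t :=
      ((hasDerivAt_id t).const_mul (-(X.trace))).exp
    have := (det_exp_deriv X t).mul h2
    refine this.congr_deriv ?_
    ring
  have hconst : g 1 = g 0 :=
    is_const_of_deriv_eq_zero (fun t => (hd t).differentiableAt)
      (fun t => (hd t).deriv) 1 0
  have h0 : g 0 = 1 := by
    simp [hg, NormedSpace.exp_zero]
  have h1 : g 1 = (NormedSpace.exp X).det * Real.exp (-(X.trace)) := by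
    simp [hg]
  rw [h1, h0] at hconst
  rw [Real.exp_neg] at hconst
  exact (mul_inv_eq_one₀ (ne_of_gt (Real.exp_pos _))).mp hconst

end Analysis2

section Analysis3

attribute [local instance] Matrix.linftyOpNormedRing Matrix.linftyOpNormedAlgebra

private lemma exp_quad_bound (X : M3) (b : ℝ)
    (hb : ∀ w : Fin 3 → ℝ, w ⬝ᵥ (X.mulVec w) ≤ b * (w ⬝ᵥ w)) (v : Fin 3 → ℝ) :
    ((NormedSpace.exp X).mulVec v) ⬝ᵥ ((NormedSpace.exp X).mulVec v)
      ≤ Real.exp (2 * b) * (v ⬝ᵥ v) := by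
  set u : ℝ → Fin 3 → ℝ := fun s => (NormedSpace.exp (s • X)).mulVec v with hu_def
  have hu : ∀ (t : ℝ) (i : Fin 3), HasDerivAt (fun s => u s i) ((X.mulVec (u t)) i) t := by
    intro t i
    have h1 : HasDerivAt (fun s => ∑ j, NormedSpace.exp (s • X) i j * v j)
        (∑ j, (X * NormedSpace.exp (t • X)) i j * v j) t :=
      HasDerivAt.fun_sum (fun j _ => (hasDerivAt_exp_entry X t i j).mul_const (v j))
    have e1 : (fun s => ∑ j, NormedSpace.exp (s • X) i j * v j) = fun s => u s i := by
      funext s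
      simp [hu_def, Matrix.mulVec, dotProduct]
    have e2 : (∑ j, (X * NormedSpace.exp (t • X)) i j * v j) = (X.mulVec (u t)) i := by
      simp only [hu_def, Matrix.mulVec_mulVec, Matrix.mulVec, dotProduct,
        Matrix.mul_apply, Finset.sum_mul, Finset.mul_sum]
      rw [Finset.sum_comm]
      apply Finset.sum_congr rfl; intro j _; apply Finset.sum_congr rfl; intro k _; ring
    rw [e1, e2] at h1
    exact h1
  set f : ℝ → ℝ := fun s => ∑ i, u s i * u s i with hf_def
  have hf : ∀ t : ℝ, HasDerivAt f (2 * (u t ⬝ᵥ (X.mulVec (u t)))) t := by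
    intro t
    have h1 : HasDerivAt f (∑ i, ((X.mulVec (u t)) i * u t i + u t i * (X.mulVec (u t)) i)) t :=
      HasDerivAt.fun_sum (fun i _ => (hu t i).mul (hu t i))
    convert h1 using 1
    simp only [dotProduct, Finset.mul_sum]
    apply Finset.sum_congr rfl
    intro i _
    ring
  set g : ℝ → ℝ := fun s => f s * Real.exp (-(2 * b) * s) with hg_def
  have hg : ∀ t : ℝ, HasDerivAt g
      (2 * (u t ⬝ᵥ (X.mulVec (u t))) * Real.exp (-(2 * b) * t)
        + f t * (Real.exp (-(2 * b) * t) * (-(2 * b) * 1))) t := by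
    intro t
    exact (hf t).mul (((hasDerivAt_id t).const_mul (-(2 * b))).exp)
  have hderiv_nonpos : ∀ t : ℝ, deriv g t ≤ 0 := by
    intro t
    rw [(hg t).deriv]
    have hfb : 2 * (u t ⬝ᵥ (X.mulVec (u t))) ≤ 2 * b * f t := by
      have := hb (u t)
      have hft : f t = u t ⬝ᵥ u t := by simp [hf_def, dotProduct]
      rw [hft]; linarith
    have he : 0 < Real.exp (-(2 * b) * t) := Real.exp_pos _
    nlinarith
  have hanti : Antitone g :=
    antitone_of_deriv_nonpos (fun t => (hg t).differentiableAt) hderiv_nonpos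
  have h01 : g 1 ≤ g 0 := hanti (by norm_num)
  have hg0 : g 0 = v ⬝ᵥ v := by
    simp [hg_def, hf_def, hu_def, NormedSpace.exp_zero, dotProduct]
  have hg1 : g 1 = (((NormedSpace.exp X).mulVec v) ⬝ᵥ ((NormedSpace.exp X).mulVec v))
      * Real.exp (-(2 * b)) := by
    simp [hg_def, hf_def, hu_def, dotProduct]
  rw [hg1, hg0] at h01
  have := mul_le_mul_of_nonneg_right h01 (le_of_lt (Real.exp_pos (2 * b)))
  calc ((NormedSpace.exp X).mulVec v) ⬝ᵥ ((NormedSpace.exp X).mulVec v)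
      = ((NormedSpace.exp X).mulVec v) ⬝ᵥ ((NormedSpace.exp X).mulVec v)
        * Real.exp (-(2 * b)) * Real.exp (2 * b) := by
        rw [mul_assoc, ← Real.exp_add]; simp
    _ ≤ (v ⬝ᵥ v) * Real.exp (2 * b) := this
    _ = Real.exp (2 * b) * (v ⬝ᵥ v) := by ring
  done

end Analysis3


private lemma frobSqR_eq_trace (A : M3) : frobSqR A = Matrix.trace (A * Aᵀ) := by
  simp [frobSqR, Matrix.trace, Matrix.diag, Matrix.mul_apply, sq_abs, pow_two]

private lemma frobSqR_nonneg (A : M3) : 0 ≤ frobSqR A := by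
  apply Finset.sum_nonneg; intro i _; apply Finset.sum_nonneg; intro j _; positivity

private lemma trace_conj (W : M3) (hW : Wᵀ * W = 1) (lam : Fin 3 → ℝ) :
    Matrix.trace (W * Matrix.diagonal lam * Wᵀ) = ∑ i, lam i := by
  rw [Matrix.trace_mul_cycle, hW, one_mul, Matrix.trace_diagonal]

private lemma conj_mul_conj (W : M3) (hW : Wᵀ * W = 1) (a b : Fin 3 → ℝ) :
    (W * Matrix.diagonal a * Wᵀ) * (W * Matrix.diagonal b * Wᵀ)
      = W * Matrix.diagonal (fun i => a i * b i) * Wᵀ := by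
  have hWx : ∀ A : M3, Wᵀ * (W * A) = A := by
    intro A; rw [← Matrix.mul_assoc, hW, one_mul]
  simp only [Matrix.mul_assoc]
  rw [hWx, ← Matrix.mul_assoc (Matrix.diagonal a), Matrix.diagonal_mul_diagonal]

private lemma conj_transpose_self (W : M3) (a : Fin 3 → ℝ) :
    (W * Matrix.diagonal a * Wᵀ)ᵀ = W * Matrix.diagonal a * Wᵀ := by
  simp [Matrix.transpose_mul, Matrix.diagonal_transpose, Matrix.mul_assoc]

private lemma frobSqR_conj (W : M3) (hW : Wᵀ * W = 1) (lam : Fin 3 → ℝ) :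
    frobSqR (W * Matrix.diagonal lam * Wᵀ) = ∑ i, lam i ^ 2 := by
  rw [frobSqR_eq_trace, conj_transpose_self, conj_mul_conj W hW, trace_conj W hW]
  apply Finset.sum_congr rfl; intro i _; ring

private lemma mulVec_dot (V : M3) (hV : Vᵀ * V = 1) (x y : Fin 3 → ℝ) :
    (V.mulVec x) ⬝ᵥ (V.mulVec y) = x ⬝ᵥ y := by
  rw [dotProduct_mulVec, ← Matrix.mulVec_transpose, Matrix.mulVec_mulVec, hV,
    Matrix.one_mulVec]

private lemma col_dot (V : M3) (hV : Vᵀ * V = 1) (i : Fin 3) :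
    (fun j => V j i) ⬝ᵥ (fun j => V j i) = 1 := by
  have hcol : (fun j => V j i) = V.mulVec (Pi.single i 1) := by
    funext j; simp [Matrix.mulVec_single]
  rw [hcol, mulVec_dot V hV]
  simp [dotProduct, Pi.single_apply]

private lemma col_eig (V : M3) (hV : Vᵀ * V = 1) (e : Fin 3 → ℝ) (i : Fin 3) :
    (V * Matrix.diagonal e * Vᵀ).mulVec (fun j => V j i) = e i • (fun j => V j i) := by
  have hcol : (fun j => V j i) = V.mulVec (Pi.single i 1) := by
    funext j; simp [Matrix.mulVec_single]
  rw [hcol, Matrix.mulVec_mulVec]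
  have : V * Matrix.diagonal e * Vᵀ * V = V * Matrix.diagonal e := by
    rw [Matrix.mul_assoc, hV, Matrix.mul_one]
  rw [this, ← Matrix.mulVec_mulVec, Matrix.diagonal_mulVec_single, mul_one,
    ← Matrix.mulVec_smul]
  funext j
  simp [Matrix.mulVec, dotProduct, Pi.single_apply, mul_comm]

private lemma quad_form_le (W : M3) (hW : Wᵀ * W = 1) (hW' : W * Wᵀ = 1)
    (lam : Fin 3 → ℝ) (b : ℝ) (hlam : ∀ i, lam i ≤ b) (w : Fin 3 → ℝ) :
    w ⬝ᵥ ((W * Matrix.diagonal lam * Wᵀ).mulVec w) ≤ b * (w ⬝ᵥ w) := by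
  set u := Wᵀ.mulVec w with hu
  have huw : w ⬝ᵥ w = u ⬝ᵥ u := by
    rw [hu, mulVec_dot Wᵀ (by rwa [Matrix.transpose_transpose])]
  have h1 : (W * Matrix.diagonal lam * Wᵀ).mulVec w
      = W.mulVec ((Matrix.diagonal lam).mulVec u) := by
    simp [hu, Matrix.mulVec_mulVec, Matrix.mul_assoc]
  have h2 : w ⬝ᵥ (W.mulVec ((Matrix.diagonal lam).mulVec u))
      = u ⬝ᵥ ((Matrix.diagonal lam).mulVec u) := by
    rw [dotProduct_mulVec, ← Matrix.mulVec_transpose]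
  rw [h1, h2, huw]
  have h3 : u ⬝ᵥ ((Matrix.diagonal lam).mulVec u) = ∑ i, lam i * (u i * u i) := by
    simp [dotProduct, Matrix.mulVec_diagonal]
    apply Finset.sum_congr rfl; intro i _; ring
  rw [h3]
  have h4 : b * (u ⬝ᵥ u) = ∑ i, b * (u i * u i) := by
    simp [dotProduct, Finset.mul_sum]
  rw [h4]
  apply Finset.sum_le_sum
  intro i _
  exact mul_le_mul_of_nonneg_right (hlam i) (mul_self_nonneg _)

private lemma conjDiag_inv (V : M3) (hV : Vᵀ * V = 1) (hV' : V * Vᵀ = 1)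
    (e : Fin 3 → ℝ) (he : ∀ i, e i ≠ 0) :
    (V * Matrix.diagonal e * Vᵀ)⁻¹ = V * Matrix.diagonal (fun i => (e i)⁻¹) * Vᵀ := by
  apply Matrix.inv_eq_right_inv
  rw [conj_mul_conj V hV]
  have : (fun i => e i * (e i)⁻¹) = fun _ : Fin 3 => (1 : ℝ) := by
    funext i; exact mul_inv_cancel₀ (he i)
  rw [this, Matrix.diagonal_one, Matrix.mul_one, hV']

private lemma log_le_aux (X : M3) (b : ℝ)
    (hq : ∀ w : Fin 3 → ℝ, w ⬝ᵥ (X.mulVec w) ≤ b * (w ⬝ᵥ w))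
    (c : ℝ) (hc : 0 < c) (v : Fin 3 → ℝ) (hv : v ⬝ᵥ v = 1)
    (heig : ((NormedSpace.exp X)ᵀ * NormedSpace.exp X).mulVec v = (c ^ 2) • v) :
    Real.log c ≤ b := by
  set M := NormedSpace.exp X with hM
  have h1 : (M.mulVec v) ⬝ᵥ (M.mulVec v) = v ⬝ᵥ ((Mᵀ * M).mulVec v) := by
    rw [dotProduct_mulVec (M.mulVec v) M v, ← Matrix.mulVec_transpose,
      Matrix.mulVec_mulVec, dotProduct_comm]
  have h2 : v ⬝ᵥ ((Mᵀ * M).mulVec v) = c ^ 2 := by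
    rw [heig, dotProduct_smul, smul_eq_mul, hv, mul_one]
  have h3 := exp_quad_bound X b hq v
  rw [← hM, h1, h2, hv, mul_one] at h3
  have h4 : c ^ 2 = Real.exp (2 * Real.log c) := by
    rw [two_mul, Real.exp_add, Real.exp_log hc, pow_two]
  rw [h4] at h3
  have := Real.exp_le_exp.mp h3
  linarith

private lemma sum_log_sq_le (X V₁ V₂ : M3) (d : Fin 3 → ℝ) (hd : ∀ i, 0 < d i)
    (hV₁ : V₁ᵀ * V₁ = 1) (hV₂ : V₂ᵀ * V₂ = 1) (hV₂' : V₂ * V₂ᵀ = 1)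
    (h₁ : (NormedSpace.exp X)ᵀ * NormedSpace.exp X
        = V₁ * Matrix.diagonal (fun i => d i ^ 2) * V₁ᵀ)
    (h₂ : (NormedSpace.exp X) * (NormedSpace.exp X)ᵀ
        = V₂ * Matrix.diagonal (fun i => d i ^ 2) * V₂ᵀ) :
    ∑ i, Real.log (d i) ^ 2 ≤ frobSqR ((1 / 2 : ℝ) • (X + Xᵀ)) := by
  set S : M3 := (1 / 2 : ℝ) • (X + Xᵀ) with hS
  -- symmetry of S
  have hSt : Sᵀ = S := by
    rw [hS, Matrix.transpose_smul, Matrix.transpose_add, Matrix.transpose_transpose, add_comm]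
  have hSh : S.IsHermitian := by
    rw [Matrix.IsHermitian, Matrix.conjTranspose_eq_transpose_of_trivial, hSt]
  -- spectral decomposition of S
  set lam : Fin 3 → ℝ := hSh.eigenvalues with hlam
  set W : M3 := (hSh.eigenvectorUnitary : M3) with hWdef
  have hWmem := hSh.eigenvectorUnitary.2
  have hW : Wᵀ * W = 1 := by
    have := (Matrix.mem_unitaryGroup_iff').mp hWmem
    rwa [Matrix.star_eq_conjTranspose, Matrix.conjTranspose_eq_transpose_of_trivial] at this
  have hW' : W * Wᵀ = 1 := by
    have := (Matrix.mem_unitaryGroup_iff).mp hWmem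
    rwa [Matrix.star_eq_conjTranspose, Matrix.conjTranspose_eq_transpose_of_trivial] at this
  have hspec : S = W * Matrix.diagonal lam * Wᵀ := by
    have := hSh.spectral_theorem
    rwa [Unitary.conjStarAlgAut_apply, Matrix.star_eq_conjTranspose, Matrix.conjTranspose_eq_transpose_of_trivial,
      RCLike.ofReal_real_eq_id, Function.id_comp] at this
  -- quadratic form of X equals that of S
  have hsymquad : ∀ w : Fin 3 → ℝ, w ⬝ᵥ (X.mulVec w) = w ⬝ᵥ (S.mulVec w) := by
    intro w
    have ht : w ⬝ᵥ (Xᵀ.mulVec w) = w ⬝ᵥ (X.mulVec w) := by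
      rw [dotProduct_comm, Matrix.mulVec_transpose, ← dotProduct_mulVec]
    rw [hS]
    rw [Matrix.smul_mulVec, Matrix.add_mulVec, dotProduct_smul,
      dotProduct_add, ht, smul_eq_mul]
    ring
  -- sorted eigenvalues
  obtain ⟨m, mu, Mx, hm1, hm2, hsum3, hsq3, hb0, hb0', hb1, hb1', hb2, hb2'⟩ :=
    sort3 (lam 0) (lam 1) (lam 2)
  have hlamle : ∀ i, lam i ≤ Mx := by intro i; fin_cases i <;> assumption
  have hlamge : ∀ i, m ≤ lam i := by intro i; fin_cases i <;> assumption
  -- quadratic bounds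
  have hq1 : ∀ w : Fin 3 → ℝ, w ⬝ᵥ (X.mulVec w) ≤ Mx * (w ⬝ᵥ w) := by
    intro w
    rw [hsymquad w, hspec]
    exact quad_form_le W hW hW' lam Mx hlamle w
  have hq2 : ∀ w : Fin 3 → ℝ, w ⬝ᵥ ((-X).mulVec w) ≤ (-m) * (w ⬝ᵥ w) := by
    intro w
    have hnegS : -S = W * Matrix.diagonal (fun i => -lam i) * Wᵀ := by
      have hdn : Matrix.diagonal (fun i => -lam i) = -Matrix.diagonal lam := by
        ext i j
        simp [Matrix.diagonal_apply, apply_ite (fun x : ℝ => -x)]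
      rw [hspec, hdn, Matrix.mul_neg, Matrix.neg_mul]
    have : w ⬝ᵥ ((-X).mulVec w) = w ⬝ᵥ ((-S).mulVec w) := by
      rw [Matrix.neg_mulVec, Matrix.neg_mulVec, dotProduct_neg,
        dotProduct_neg, hsymquad w]
    rw [this, hnegS]
    exact quad_form_le W hW hW' _ (-m) (fun i => by simp [hlamge i]) w
  -- upper bounds: log (d i) ≤ Mx
  have hlogle : ∀ i, Real.log (d i) ≤ Mx := by
    intro i
    exact log_le_aux X Mx hq1 (d i) (hd i) (fun j => V₁ j i) (col_dot V₁ hV₁ i)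
      (by rw [h₁]; exact col_eig V₁ hV₁ _ i)
  -- lower bounds: m ≤ log (d i)
  have hdet : (NormedSpace.exp X).det ≠ 0 := by
    rw [det_exp3 X]; positivity
  have hexpneg : (NormedSpace.exp X)ᵀ.det ≠ 0 := by rwa [Matrix.det_transpose]
  have hinv : (NormedSpace.exp (-X))ᵀ * NormedSpace.exp (-X)
      = V₂ * Matrix.diagonal (fun i => ((d i)⁻¹) ^ 2) * V₂ᵀ := by
    rw [Matrix.exp_neg X, Matrix.transpose_nonsing_inv, ← Matrix.mul_inv_rev, h₂,
      conjDiag_inv V₂ hV₂ hV₂' _ (fun i => by have := hd i; positivity)]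
    have hfun : (fun i => ((d i)⁻¹ : ℝ) ^ 2) = (fun i => ((d i ^ 2)⁻¹ : ℝ)) := by
      funext i; rw [inv_pow]
    rw [hfun]
  have hlogge : ∀ i, m ≤ Real.log (d i) := by
    intro i
    have := log_le_aux (-X) (-m) hq2 ((d i)⁻¹) (by have := hd i; positivity)
      (fun j => V₂ j i) (col_dot V₂ hV₂ i) (by rw [hinv]; exact col_eig V₂ hV₂ _ i)
    rw [Real.log_inv] at this
    linarith
  -- trace identity
  have htraceS : Matrix.trace S = ∑ i, lam i := by rw [hspec, trace_conj W hW]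
  have htraceX : Matrix.trace S = Matrix.trace X := by
    rw [hS, Matrix.trace_smul, Matrix.trace_add, Matrix.trace_transpose, smul_eq_mul]
    ring
  -- determinant identity
  have hdetV₁ : V₁.det * V₁.det = 1 := by
    have := congrArg Matrix.det hV₁
    rwa [Matrix.det_mul, Matrix.det_transpose, Matrix.det_one] at this
  have hdetsq : (NormedSpace.exp X).det ^ 2 = (∏ i, d i) ^ 2 := by
    have := congrArg Matrix.det h₁
    rw [Matrix.det_mul, Matrix.det_transpose, Matrix.det_mul, Matrix.det_mul,
      Matrix.det_diagonal, Matrix.det_transpose] at this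
    have hrw : ∏ i, d i ^ 2 = (∏ i, d i) ^ 2 := by rw [Finset.prod_pow]
    calc (NormedSpace.exp X).det ^ 2
        = (NormedSpace.exp X).det * (NormedSpace.exp X).det := sq ((NormedSpace.exp X).det)
      _ = V₁.det * V₁.det * ∏ i, d i ^ 2 := by rw [this]; ring
      _ = ∏ i, d i ^ 2 := by rw [hdetV₁, one_mul]
      _ = (∏ i, d i) ^ 2 := hrw
  have hdetpos : 0 < (NormedSpace.exp X).det := by rw [det_exp3 X]; positivity
  have hprodpos : 0 < ∏ i, d i := Finset.prod_pos (fun i _ => hd i)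
  have hdeteq : (NormedSpace.exp X).det = ∏ i, d i := by nlinarith [hdetsq]
  -- sum identity
  have hsumlog : ∑ i, Real.log (d i) = ∑ i, lam i := by
    have h5 : Real.exp (∑ i, Real.log (d i)) = Real.exp (∑ i, lam i) := by
      rw [Real.exp_sum, Real.exp_sum]
      have : ∀ i ∈ Finset.univ, Real.exp (Real.log (d i)) = d i :=
        fun i _ => Real.exp_log (hd i)
      rw [Finset.prod_congr rfl this]
      rw [← hdeteq, det_exp3 X, ← htraceX, htraceS, Real.exp_sum]
    exact Real.exp_injective h5
  -- conclude via key3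
  have hfrob : frobSqR S = ∑ i, lam i ^ 2 := by rw [hspec, frobSqR_conj W hW]
  rw [hfrob]
  rw [Fin.sum_univ_three, Fin.sum_univ_three]
  rw [Fin.sum_univ_three, Fin.sum_univ_three] at hsumlog
  rw [← hsq3]
  exact key3 _ _ _ m mu Mx hm1 hm2 (hlogge 0) (hlogle 0) (hlogge 1) (hlogle 1)
    (hlogge 2) (hlogle 2) (by linarith)

private lemma orth_eqs {A : M3} (h : A ∈ Matrix.orthogonalGroup (Fin 3) ℝ) :
    Aᵀ * A = 1 ∧ A * Aᵀ = 1 := by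
  constructor
  · have := (Matrix.mem_unitaryGroup_iff').mp h
    rwa [Matrix.star_eq_conjTranspose, Matrix.conjTranspose_eq_transpose_of_trivial] at this
  · have := (Matrix.mem_unitaryGroup_iff).mp h
    rwa [Matrix.star_eq_conjTranspose, Matrix.conjTranspose_eq_transpose_of_trivial] at this

private lemma mulT (P F : M3) (h : Pᵀ * P = 1) : (P * F)ᵀ * (P * F) = Fᵀ * F := by
  rw [Matrix.transpose_mul, Matrix.mul_assoc, ← Matrix.mul_assoc Pᵀ, h, one_mul]

private lemma mulT' (A B : M3) : (A * B) * (A * B)ᵀ = A * (B * Bᵀ) * Aᵀ := by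
  rw [Matrix.transpose_mul]
  simp only [Matrix.mul_assoc]

private lemma smul_half_add {L : M3} (hL : Lᵀ = L) : (1 / 2 : ℝ) • (L + Lᵀ) = L := by
  rw [hL, ← two_smul ℝ L, smul_smul]
  norm_num

private lemma exp_conj_diag (V : M3) (hV' : V * Vᵀ = 1) (e : Fin 3 → ℝ) :
    NormedSpace.exp (V * Matrix.diagonal e * Vᵀ)
      = V * Matrix.diagonal (fun i => Real.exp (e i)) * Vᵀ := by
  have hVinv : V⁻¹ = Vᵀ := Matrix.inv_eq_right_inv hV'
  have hVu : IsUnit V := by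
    apply (Matrix.isUnit_iff_isUnit_det V).mpr
    apply IsUnit.of_mul_eq_one (Vᵀ.det)
    rw [← Matrix.det_mul, hV', Matrix.det_one]
  rw [← hVinv, Matrix.exp_conj V (Matrix.diagonal e) hVu, Matrix.exp_diagonal]
  have hpi : NormedSpace.exp e = fun i => Real.exp (e i) := by
    rw [Pi.exp_def]
    funext i
    rw [Real.exp_eq_exp_ℝ]
  rw [hpi]

/-- For `F ∈ GL⁺(3,ℝ)` with polar decomposition `F = U_p H`, `H = V D Vᵀ`,
`D = diag d`, and all `μ > 0`, `μ_c ≥ 0`, the minimum over `Q ∈ SO(3)` and all real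
logarithms `X` of `Qᵀ F` of `μ‖sym X‖_F² + μ_c‖skew X‖_F²` equals
`μ‖log H‖_F² = μ Σᵢ (log dᵢ)²`, attained at `Q = U_p`. -/
theorem min_weighted_frobSq_log_SO3 (F Up H L V : Matrix (Fin 3) (Fin 3) ℝ)
    (hF : 0 < F.det)
    (hUp : Up ∈ Matrix.orthogonalGroup (Fin 3) ℝ) (hUpdet : Up.det = 1)
    (hH : H.PosDef) (hpolar : F = Up * H)
    (hL : L.IsSymm) (hexpL : NormedSpace.exp L = H)
    (d : Fin 3 → ℝ) (hdpos : ∀ i, 0 < d i)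
    (hV : V ∈ Matrix.orthogonalGroup (Fin 3) ℝ)
    (hdiag : H = V * Matrix.diagonal d * Vᵀ)
    (μ μc : ℝ) (hμ : 0 < μ) (hμc : 0 ≤ μc) :
    IsLeast {r : ℝ | ∃ Q ∈ Matrix.orthogonalGroup (Fin 3) ℝ, Q.det = 1 ∧
        ∃ X : Matrix (Fin 3) (Fin 3) ℝ, NormedSpace.exp X = Qᵀ * F ∧
          r = μ * frobSqR ((1 / 2 : ℝ) • (X + Xᵀ)) + μc * frobSqR ((1 / 2 : ℝ) • (X - Xᵀ))}
      (μ * frobSqR L) ∧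
    μ * frobSqR L = μ * ∑ i, (Real.log (d i)) ^ 2 := by
  obtain ⟨hUp1, hUp2⟩ := orth_eqs hUp
  obtain ⟨hV1, hV2⟩ := orth_eqs hV
  have hLt : Lᵀ = L := hL
  have hHt : Hᵀ = H := by
    have := hH.1
    rwa [Matrix.IsHermitian, Matrix.conjTranspose_eq_transpose_of_trivial] at this
  have hdsq : (fun i => d i * d i) = fun i => d i ^ 2 := by funext i; ring
  have hH2 : H * H = V * Matrix.diagonal (fun i => d i ^ 2) * Vᵀ := by
    rw [hdiag, conj_mul_conj V hV1, hdsq]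
  -- exp L = H = Upᵀ F
  have hexpLH : NormedSpace.exp L = Upᵀ * F := by
    rw [hexpL, hpolar, ← Matrix.mul_assoc, hUp1, one_mul]
  -- (exp L)ᵀ exp L = V D² Vᵀ
  have hLexp1 : (NormedSpace.exp L)ᵀ * NormedSpace.exp L
      = V * Matrix.diagonal (fun i => d i ^ 2) * Vᵀ := by
    rw [hexpL, hHt, hH2]
  have hLexp2 : (NormedSpace.exp L) * (NormedSpace.exp L)ᵀ
      = V * Matrix.diagonal (fun i => d i ^ 2) * Vᵀ := by
    rw [hexpL, hHt, hH2]
  -- (a): ∑ log² ≤ frobSqR L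
  have hle1 : ∑ i, Real.log (d i) ^ 2 ≤ frobSqR L := by
    have := sum_log_sq_le L V V d hdpos hV1 hV1 hV2 hLexp1 hLexp2
    rwa [smul_half_add hLt] at this
  -- (b): frobSqR L ≤ ∑ log²
  have hLh : L.IsHermitian := by
    rw [Matrix.IsHermitian, Matrix.conjTranspose_eq_transpose_of_trivial, hLt]
  set lamL : Fin 3 → ℝ := hLh.eigenvalues with hlamL
  set WL : M3 := (hLh.eigenvectorUnitary : M3) with hWL
  obtain ⟨hWL1, hWL2⟩ := orth_eqs hLh.eigenvectorUnitary.2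
  have hspecL : L = WL * Matrix.diagonal lamL * WLᵀ := by
    have := hLh.spectral_theorem
    rwa [Unitary.conjStarAlgAut_apply, Matrix.star_eq_conjTranspose, Matrix.conjTranspose_eq_transpose_of_trivial,
      RCLike.ofReal_real_eq_id, Function.id_comp] at this
  have hexpL2 : NormedSpace.exp (V * Matrix.diagonal (fun i => Real.log (d i)) * Vᵀ)
      = H := by
    rw [exp_conj_diag V hV2]
    have : (fun i => Real.exp (Real.log (d i))) = d := by
      funext i; rw [Real.exp_log (hdpos i)]
    rw [this, ← hdiag]
  have hHWL : H = WL * Matrix.diagonal (fun i => Real.exp (lamL i)) * WLᵀ := by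
    rw [← hexpL, hspecL, exp_conj_diag WL hWL2]
  have hexpsq : (fun i => Real.exp (lamL i) * Real.exp (lamL i))
      = fun i => Real.exp (lamL i) ^ 2 := by funext i; ring
  have hle2 : frobSqR L ≤ ∑ i, Real.log (d i) ^ 2 := by
    set L₂ : M3 := V * Matrix.diagonal (fun i => Real.log (d i)) * Vᵀ with hL₂
    have hL₂t : L₂ᵀ = L₂ := conj_transpose_self V _
    have hexp1 : (NormedSpace.exp L₂)ᵀ * NormedSpace.exp L₂
        = WL * Matrix.diagonal (fun i => Real.exp (lamL i) ^ 2) * WLᵀ := by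
      rw [hexpL2, hHt, hHWL, conj_mul_conj WL hWL1, hexpsq]
    have hexp2 : (NormedSpace.exp L₂) * (NormedSpace.exp L₂)ᵀ
        = WL * Matrix.diagonal (fun i => Real.exp (lamL i) ^ 2) * WLᵀ := by
      rw [hexpL2, hHt, hHWL, conj_mul_conj WL hWL1, hexpsq]
    have := sum_log_sq_le L₂ WL WL (fun i => Real.exp (lamL i))
      (fun i => Real.exp_pos _) hWL1 hWL1 hWL2 hexp1 hexp2
    rw [smul_half_add hL₂t] at this
    have hlogexp : ∑ i, Real.log (Real.exp (lamL i)) ^ 2 = ∑ i, lamL i ^ 2 := by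
      apply Finset.sum_congr rfl; intro i _; rw [Real.log_exp]
    rw [hlogexp] at this
    have hfrobL : frobSqR L = ∑ i, lamL i ^ 2 := by rw [hspecL, frobSqR_conj WL hWL1]
    have hfrobL₂ : frobSqR L₂ = ∑ i, Real.log (d i) ^ 2 := frobSqR_conj V hV1 _
    rw [hfrobL, ← hfrobL₂]
    exact this
  have heq : frobSqR L = ∑ i, Real.log (d i) ^ 2 := le_antisymm hle2 hle1
  constructor
  · constructor
    · -- membership: Q = Up, X = L
      refine ⟨Up, hUp, hUpdet, L, hexpLH, ?_⟩
      have h0 : (1 / 2 : ℝ) • (L - Lᵀ) = (0 : M3) := by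
        rw [hLt, sub_self, smul_zero]
      rw [smul_half_add hLt, h0]
      have : frobSqR (0 : M3) = 0 := by simp [frobSqR]
      rw [this, mul_zero, add_zero]
    · -- lower bound
      rintro r ⟨Q, hQ, hQdet, X, hexpX, hr⟩
      obtain ⟨hQ1, hQ2⟩ := orth_eqs hQ
      have hQt2 : Qᵀᵀ * Qᵀ = 1 := by rwa [Matrix.transpose_transpose]
      have h₁ : (NormedSpace.exp X)ᵀ * NormedSpace.exp X
          = V * Matrix.diagonal (fun i => d i ^ 2) * Vᵀ := by
        rw [hexpX, mulT Qᵀ F hQt2, hpolar, mulT Up H hUp1, hHt, hH2]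
      set V₂ : M3 := Qᵀ * (Up * V) with hV₂def
      have hUpV1 : (Up * V)ᵀ * (Up * V) = 1 := by
        rw [mulT Up V hUp1, hV1]
      have hUpV2 : (Up * V) * (Up * V)ᵀ = 1 := by
        rw [mulT', hV2, Matrix.mul_one, hUp2]
      have hV₂1 : V₂ᵀ * V₂ = 1 := by
        rw [hV₂def, mulT Qᵀ (Up * V) hQt2, hUpV1]
      have hV₂2 : V₂ * V₂ᵀ = 1 := by
        rw [hV₂def, mulT', hUpV2, Matrix.mul_one, Matrix.transpose_transpose, hQ1]
      have h₂ : (NormedSpace.exp X) * (NormedSpace.exp X)ᵀ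
          = V₂ * Matrix.diagonal (fun i => d i ^ 2) * V₂ᵀ := by
        rw [hexpX, mulT' Qᵀ F, hpolar, mulT' Up H, hHt, hH2, hV₂def]
        simp only [Matrix.transpose_mul, Matrix.transpose_transpose, Matrix.mul_assoc]
      have hineq := sum_log_sq_le X V V₂ d hdpos hV1 hV₂1 hV₂2 h₁ h₂
      have h1 : μ * ∑ i, Real.log (d i) ^ 2 ≤ μ * frobSqR ((1 / 2 : ℝ) • (X + Xᵀ)) :=
        mul_le_mul_of_nonneg_left hineq (le_of_lt hμ)
      have h2 : 0 ≤ μc * frobSqR ((1 / 2 : ℝ) • (X - Xᵀ)) :=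
        mul_nonneg hμc (frobSqR_nonneg _)
      rw [hr, heq]
      linarith
  · rw [heq]
end

section
/- Let D = diag(d₁,d₂,d₃) with dᵢ > 0. Then min over Q ∈ SO(3) and all real matrix logarithms X with exp X = Qᵀ D of ‖dev₃(sym X)‖_F² equals ‖dev₃(log D)‖_F², where dev₃ Y = Y − (tr Y / 3)·I. -/
open Matrix

/-- Deviatoric (trace-free) part: `dev₃ Y = Y − (tr Y / 3) • I`. -/
noncomputable def dev3 (Y : Matrix (Fin 3) (Fin 3) ℝ) : Matrix (Fin 3) (Fin 3) ℝ :=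
  Y - (Matrix.trace Y / 3) • (1 : Matrix (Fin 3) (Fin 3) ℝ)

/-! ### Auxiliary scalar (majorization) lemmas -/

private lemma core3 (x y z a b c : ℝ) (hxy : y ≤ x) (hyz : z ≤ y) (hab : b ≤ a) (hbc : c ≤ b)
    (h1 : a ≤ x) (h3 : z ≤ c) (hsum : a + b + c = x + y + z) :
    a^2 + b^2 + c^2 ≤ x^2 + y^2 + z^2 := by
  have e1 : 0 ≤ (x-a)*(x+a-y-b) := mul_nonneg (by linarith) (by linarith)
  have e2 : 0 ≤ (c-z)*(y+b-z-c) := mul_nonneg (by linarith) (by linarith)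
  have hz : x + y + z - a - b - c = 0 := by linarith
  have key : x^2+y^2+z^2 - (a^2+b^2+c^2) =
      (x-a)*(x+a-y-b) + (c-z)*(y+b-z-c) + (y+b)*(x+y+z-a-b-c) := by ring
  rw [hz, mul_zero, add_zero] at key
  linarith

private lemma semi3 (x y z a b c : ℝ) (hxy : y ≤ x) (hyz : z ≤ y)
    (ha1 : a ≤ x) (ha2 : z ≤ a) (hb1 : b ≤ x) (hb2 : z ≤ b) (hc1 : c ≤ x) (hc2 : z ≤ c)
    (hsum : a + b + c = x + y + z) :
    a^2 + b^2 + c^2 ≤ x^2 + y^2 + z^2 := by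
  rcases le_total a b with h1 | h1 <;> rcases le_total b c with h2 | h2 <;>
    rcases le_total a c with h3 | h3
  · have := core3 x y z c b a hxy hyz (by linarith) (by linarith) hc1 ha2 (by linarith); linarith
  · have := core3 x y z c b a hxy hyz (by linarith) (by linarith) hc1 ha2 (by linarith); linarith
  · have := core3 x y z b c a hxy hyz (by linarith) (by linarith) hb1 ha2 (by linarith); linarith
  · have := core3 x y z b a c hxy hyz (by linarith) (by linarith) hb1 hc2 (by linarith); linarith
  · have := core3 x y z c a b hxy hyz (by linarith) (by linarith) hc1 hb2 (by linarith); linarith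
  · have := core3 x y z a c b hxy hyz (by linarith) (by linarith) ha1 hb2 (by linarith); linarith
  · have := core3 x y z a c b hxy hyz (by linarith) (by linarith) ha1 hb2 (by linarith); linarith
  · have := core3 x y z a b c hxy hyz (by linarith) (by linarith) ha1 hc2 (by linarith); linarith

private lemma scalar_maj (p q r a b c : ℝ)
    (ha1 : a ≤ max (max p q) r) (ha2 : min (min p q) r ≤ a)
    (hb1 : b ≤ max (max p q) r) (hb2 : min (min p q) r ≤ b)
    (hc1 : c ≤ max (max p q) r) (hc2 : min (min p q) r ≤ c)
    (hsum : a + b + c = p + q + r) :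
    a^2 + b^2 + c^2 ≤ p^2 + q^2 + r^2 := by
  rcases le_total p q with h1 | h1 <;> rcases le_total q r with h2 | h2 <;>
    rcases le_total p r with h3 | h3 <;>
  [ (have hM : max (max p q) r ≤ r := max_le (max_le (by linarith) (by linarith)) (by linarith)
     have hm : p ≤ min (min p q) r := le_min (le_min (by linarith) (by linarith)) (by linarith)
     have := semi3 r q p a b c (by linarith) (by linarith) (by linarith) (by linarith)
       (by linarith) (by linarith) (by linarith) (by linarith) (by linarith));
    (have hM : max (max p q) r ≤ r := max_le (max_le (by linarith) (by linarith)) (by linarith)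
     have hm : p ≤ min (min p q) r := le_min (le_min (by linarith) (by linarith)) (by linarith)
     have := semi3 r q p a b c (by linarith) (by linarith) (by linarith) (by linarith)
       (by linarith) (by linarith) (by linarith) (by linarith) (by linarith));
    (have hM : max (max p q) r ≤ q := max_le (max_le (by linarith) (by linarith)) (by linarith)
     have hm : p ≤ min (min p q) r := le_min (le_min (by linarith) (by linarith)) (by linarith)
     have := semi3 q r p a b c (by linarith) (by linarith) (by linarith) (by linarith)
       (by linarith) (by linarith) (by linarith) (by linarith) (by linarith));
    (have hM : max (max p q) r ≤ q := max_le (max_le (by linarith) (by linarith)) (by linarith)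
     have hm : r ≤ min (min p q) r := le_min (le_min (by linarith) (by linarith)) (by linarith)
     have := semi3 q p r a b c (by linarith) (by linarith) (by linarith) (by linarith)
       (by linarith) (by linarith) (by linarith) (by linarith) (by linarith));
    (have hM : max (max p q) r ≤ r := max_le (max_le (by linarith) (by linarith)) (by linarith)
     have hm : q ≤ min (min p q) r := le_min (le_min (by linarith) (by linarith)) (by linarith)
     have := semi3 r p q a b c (by linarith) (by linarith) (by linarith) (by linarith)
       (by linarith) (by linarith) (by linarith) (by linarith) (by linarith));
    (have hM : max (max p q) r ≤ p := max_le (max_le (by linarith) (by linarith)) (by linarith)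
     have hm : q ≤ min (min p q) r := le_min (le_min (by linarith) (by linarith)) (by linarith)
     have := semi3 p r q a b c (by linarith) (by linarith) (by linarith) (by linarith)
       (by linarith) (by linarith) (by linarith) (by linarith) (by linarith));
    (have hM : max (max p q) r ≤ p := max_le (max_le (by linarith) (by linarith)) (by linarith)
     have hm : q ≤ min (min p q) r := le_min (le_min (by linarith) (by linarith)) (by linarith)
     have := semi3 p r q a b c (by linarith) (by linarith) (by linarith) (by linarith)
       (by linarith) (by linarith) (by linarith) (by linarith) (by linarith));
    (have hM : max (max p q) r ≤ p := max_le (max_le (by linarith) (by linarith)) (by linarith)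
     have hm : r ≤ min (min p q) r := le_min (le_min (by linarith) (by linarith)) (by linarith)
     have := semi3 p q r a b c (by linarith) (by linarith) (by linarith) (by linarith)
       (by linarith) (by linarith) (by linarith) (by linarith) (by linarith))] <;>
  · nlinarith [this]

/-! ### Frobenius norm helper lemmas -/

private lemma frobSq_eq (X : Matrix (Fin 3) (Fin 3) ℝ) : frobSqR X = ∑ i, ∑ j, (X i j)^2 := by
  simp [frobSqR, sq_abs]

private lemma frob_dev3 (M : Matrix (Fin 3) (Fin 3) ℝ) :
    frobSqR (dev3 M) = frobSqR M - (Matrix.trace M)^2 / 3 := by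
  simp only [frobSq_eq, dev3, Matrix.trace_fin_three, Matrix.sub_apply, Matrix.smul_apply,
    Matrix.one_apply, Fin.sum_univ_three]
  norm_num [Fin.ext_iff]
  ring

private lemma mulVec_dot_s17 (A : Matrix (Fin 3) (Fin 3) ℝ) (x y : Fin 3 → ℝ) :
    (A *ᵥ x) ⬝ᵥ y = x ⬝ᵥ (Aᵀ *ᵥ y) := by
  rw [dotProduct_comm, dotProduct_mulVec, mulVec_transpose, dotProduct_comm]

/-! ### Spectral lemmas for real symmetric 3×3 matrices -/

section spec
variable {S : Matrix (Fin 3) (Fin 3) ℝ} (hS : S.IsHermitian)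

private lemma spec_repr (u : Fin 3 → ℝ) :
    ∃ w : Fin 3 → ℝ, (S *ᵥ u) ⬝ᵥ u = ∑ i, hS.eigenvalues i * (w i)^2 ∧
      u ⬝ᵥ u = ∑ i, (w i)^2 := by
  set U : Matrix (Fin 3) (Fin 3) ℝ := (hS.eigenvectorUnitary : Matrix (Fin 3) (Fin 3) ℝ) with hUdef
  have hU := hS.eigenvectorUnitary.prop
  have hUU : star U * U = 1 := (Unitary.mem_iff.mp hU).1
  have hUU' : U * star U = 1 := (Unitary.mem_iff.mp hU).2
  have hstar : star U = Uᵀ := by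
    rw [Matrix.star_eq_conjTranspose, Matrix.conjTranspose_eq_transpose_of_trivial]
  have hsp : S = U * diagonal hS.eigenvalues * star U := by
    have := hS.spectral_theorem
    simpa [RCLike.ofReal_real_eq_id] using this
  set w : Fin 3 → ℝ := star U *ᵥ u with hw
  refine ⟨w, ?_, ?_⟩
  · have h0 : (S *ᵥ u) ⬝ᵥ u = ((U * diagonal hS.eigenvalues * star U) *ᵥ u) ⬝ᵥ u := by
      rw [← hsp]
    rw [h0, ← mulVec_mulVec, ← mulVec_mulVec, mulVec_dot_s17, ← hstar, ← hw]
    simp only [dotProduct, Matrix.mulVec_diagonal]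
    exact Finset.sum_congr rfl fun i _ => by ring
  · have h1 : w ⬝ᵥ w = u ⬝ᵥ u := by
      conv_lhs => rw [hw, mulVec_dot_s17, hstar, transpose_transpose, ← hstar, mulVec_mulVec, hUU',
        one_mulVec]
    rw [← h1]
    simp only [dotProduct]
    exact Finset.sum_congr rfl fun i _ => by ring

private lemma spec_trace : Matrix.trace S = ∑ i, hS.eigenvalues i := by
  have hU := hS.eigenvectorUnitary.prop
  have hUU : star (hS.eigenvectorUnitary : Matrix (Fin 3) (Fin 3) ℝ) *
      (hS.eigenvectorUnitary : Matrix (Fin 3) (Fin 3) ℝ) = 1 := (Unitary.mem_iff.mp hU).1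
  have hsp : S = (hS.eigenvectorUnitary : Matrix (Fin 3) (Fin 3) ℝ) * diagonal hS.eigenvalues *
      star (hS.eigenvectorUnitary : Matrix (Fin 3) (Fin 3) ℝ) := by
    have := hS.spectral_theorem
    simpa [RCLike.ofReal_real_eq_id] using this
  have h0 : Matrix.trace S = Matrix.trace ((hS.eigenvectorUnitary : Matrix (Fin 3) (Fin 3) ℝ) *
      diagonal hS.eigenvalues * star (hS.eigenvectorUnitary : Matrix (Fin 3) (Fin 3) ℝ)) := by
    rw [← hsp]
  rw [h0, Matrix.trace_mul_comm, ← mul_assoc, hUU, one_mul, trace_diagonal]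

private lemma spec_frob : Matrix.trace (S * S) = ∑ i, (hS.eigenvalues i)^2 := by
  set U : Matrix (Fin 3) (Fin 3) ℝ := (hS.eigenvectorUnitary : Matrix (Fin 3) (Fin 3) ℝ) with hUdef
  have hU := hS.eigenvectorUnitary.prop
  have hUU : star U * U = 1 := (Unitary.mem_iff.mp hU).1
  have hsp : S = U * diagonal hS.eigenvalues * star U := by
    have := hS.spectral_theorem
    simpa [RCLike.ofReal_real_eq_id] using this
  have key : S * S = U * (diagonal hS.eigenvalues * diagonal hS.eigenvalues) * star U := by
    have h0 : S * S =
        (U * diagonal hS.eigenvalues * star U) * (U * diagonal hS.eigenvalues * star U) := by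
      rw [← hsp]
    rw [h0]
    calc (U * diagonal hS.eigenvalues * star U) * (U * diagonal hS.eigenvalues * star U)
        = U * diagonal hS.eigenvalues * ((star U * U) * (diagonal hS.eigenvalues * star U)) := by
          simp only [mul_assoc]
      _ = U * (diagonal hS.eigenvalues * diagonal hS.eigenvalues) * star U := by
          rw [hUU, one_mul]; simp only [mul_assoc]
  rw [key, Matrix.trace_mul_comm, ← mul_assoc, ← mul_assoc, hUU, one_mul,
    diagonal_mul_diagonal, trace_diagonal]
  exact Finset.sum_congr rfl fun i _ => (sq _).symm

end spec

/-! ### Exponential / Grönwall machinery -/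

open NormedSpace

section gron
attribute [local instance] Matrix.linftyOpSemiNormedRing Matrix.linftyOpNormedRing
  Matrix.linftyOpNormedAlgebra

private noncomputable def entryCLM (i j : Fin 3) : Matrix (Fin 3) (Fin 3) ℝ →L[ℝ] ℝ :=
  LinearMap.toContinuousLinearMap (Matrix.entryLinearMap ℝ ℝ i j)

private lemma entry_hasDerivAt {f : ℝ → Matrix (Fin 3) (Fin 3) ℝ} {f' : Matrix (Fin 3) (Fin 3) ℝ}
    {t : ℝ} (hf : HasDerivAt f f' t) (i j : Fin 3) :
    HasDerivAt (fun s => f s i j) (f' i j) t :=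
  ((entryCLM i j).hasFDerivAt.comp_hasDerivAt t hf :)

private lemma exp_entry_hasDerivAt (A : Matrix (Fin 3) (Fin 3) ℝ) (t : ℝ) (i j : Fin 3) :
    HasDerivAt (fun s => exp (s • A) i j) ((A * exp (t • A)) i j) t :=
  entry_hasDerivAt (hasDerivAt_exp_smul_const' A t) i j

private lemma mulVec_entry_hasDerivAt (A : Matrix (Fin 3) (Fin 3) ℝ) (v : Fin 3 → ℝ) (t : ℝ)
    (i : Fin 3) :
    HasDerivAt (fun s : ℝ => (exp (s • A) *ᵥ v) i) (((A * exp (t • A)) *ᵥ v) i) t := by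
  have : ∀ s : ℝ, (exp (s • A) *ᵥ v) i = ∑ j, exp (s • A) i j * v j := by
    intro s; simp [Matrix.mulVec, dotProduct]
  simp only [this]
  have h2 : ((A * exp (t • A)) *ᵥ v) i = ∑ j, (A * exp (t • A)) i j * v j := by
    simp [Matrix.mulVec, dotProduct]
  rw [h2]
  exact HasDerivAt.fun_sum fun j _ => (exp_entry_hasDerivAt A t i j).mul_const (v j)

private lemma gron (A : Matrix (Fin 3) (Fin 3) ℝ) (c : ℝ)
    (hq : ∀ u : Fin 3 → ℝ, (A *ᵥ u) ⬝ᵥ u ≤ c * (u ⬝ᵥ u)) (v : Fin 3 → ℝ) :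
    (exp A *ᵥ v) ⬝ᵥ (exp A *ᵥ v) ≤ Real.exp (2*c) * (v ⬝ᵥ v) := by
  set g : ℝ → ℝ := fun t : ℝ => (exp (t • A) *ᵥ v) ⬝ᵥ (exp (t • A) *ᵥ v) with hgdef
  have hg : ∀ t, HasDerivAt g
      (2 * ((A *ᵥ (exp (t • A) *ᵥ v)) ⬝ᵥ (exp (t • A) *ᵥ v))) t := by
    intro t
    simp only [hgdef]
    have := HasDerivAt.sum (fun i (_ : i ∈ Finset.univ) =>
      (mulVec_entry_hasDerivAt A v t i).mul (mulVec_entry_hasDerivAt A v t i))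
    have heq : ∑ i, (((A * exp (t • A)) *ᵥ v) i * (exp (t • A) *ᵥ v) i +
        (exp (t • A) *ᵥ v) i * ((A * exp (t • A)) *ᵥ v) i) =
        2 * ((A *ᵥ (exp (t • A) *ᵥ v)) ⬝ᵥ (exp (t • A) *ᵥ v)) := by
      rw [← Matrix.mulVec_mulVec, dotProduct, Finset.mul_sum]
      exact Finset.sum_congr rfl fun i _ => by ring
    rw [heq] at this
    exact this
  set h : ℝ → ℝ := fun t => Real.exp (-(2*c)*t) * g t with hhdef
  have hh : ∀ t, HasDerivAt h
      (Real.exp (-(2*c)*t) * (-(2*c) * g t) + Real.exp (-(2*c)*t) *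
        (2 * ((A *ᵥ (exp (t • A) *ᵥ v)) ⬝ᵥ (exp (t • A) *ᵥ v)))) t := by
    intro t
    have hinner : HasDerivAt (fun t : ℝ => -(2*c)*t) (-(2*c)) t := by
      simpa using (hasDerivAt_id t).const_mul (-(2*c))
    have hexp : HasDerivAt (fun t : ℝ => Real.exp (-(2*c)*t)) (Real.exp (-(2*c)*t) * (-(2*c))) t :=
      hinner.exp
    have := hexp.mul (hg t)
    convert this using 1
    · rfl
    · rfl
    · rfl
    ring
  have hdec : Antitone h := by
    apply antitone_of_deriv_nonpos
    · exact fun t => (hh t).differentiableAt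
    · intro t
      rw [(hh t).deriv]
      have hb := hq (exp (t • A) *ᵥ v)
      have hge : (0:ℝ) ≤ Real.exp (-(2*c)*t) := (Real.exp_pos _).le
      nlinarith [hge, hb]
  have h10 : h 1 ≤ h 0 := hdec (by norm_num)
  have hg0 : g 0 = v ⬝ᵥ v := by
    simp only [hgdef, zero_smul, exp_zero, Matrix.one_mulVec]
  have hg1 : g 1 = (exp A *ᵥ v) ⬝ᵥ (exp A *ᵥ v) := by
    simp only [hgdef, one_smul]
  rw [hhdef] at h10
  simp only [mul_zero, Real.exp_zero, one_mul, mul_one] at h10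
  rw [hg0, hg1] at h10
  calc (exp A *ᵥ v) ⬝ᵥ (exp A *ᵥ v)
      = Real.exp (2*c) * (Real.exp (-(2*c)) * ((exp A *ᵥ v) ⬝ᵥ (exp A *ᵥ v))) := by
        rw [← mul_assoc, ← Real.exp_add]; norm_num
    _ ≤ Real.exp (2*c) * (v ⬝ᵥ v) := by
        apply mul_le_mul_of_nonneg_left _ (Real.exp_pos _).le
        exact h10

private lemma det_hasDerivAt (A : Matrix (Fin 3) (Fin 3) ℝ) (t : ℝ) :
    HasDerivAt (fun s : ℝ => (exp (s • A)).det) (Matrix.trace A * (exp (t • A)).det) t := by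
  have hd : ∀ s : ℝ, (exp (s • A)).det =
      exp (s • A) 0 0 * (exp (s • A) 1 1 * exp (s • A) 2 2 -
        exp (s • A) 1 2 * exp (s • A) 2 1) -
      exp (s • A) 0 1 * (exp (s • A) 1 0 * exp (s • A) 2 2 -
        exp (s • A) 1 2 * exp (s • A) 2 0) +
      exp (s • A) 0 2 * (exp (s • A) 1 0 * exp (s • A) 2 1 -
        exp (s • A) 1 1 * exp (s • A) 2 0) := fun s => by
    rw [Matrix.det_fin_three]; ring
  simp only [hd]
  have H : ∀ i j, HasDerivAt (fun s : ℝ => exp (s • A) i j) ((A * exp (t • A)) i j) t :=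
    exp_entry_hasDerivAt A t
  have hder := (((H 0 0).mul (((H 1 1).mul (H 2 2)).sub ((H 1 2).mul (H 2 1)))).sub
      ((H 0 1).mul (((H 1 0).mul (H 2 2)).sub ((H 1 2).mul (H 2 0))))).add
      ((H 0 2).mul (((H 1 0).mul (H 2 1)).sub ((H 1 1).mul (H 2 0))))
  convert hder using 1
  · rfl
  · rfl
  · rfl
  have hmul : ∀ i j, (A * exp (t • A)) i j = ∑ k, A i k * exp (t • A) k j :=
    fun i j => Matrix.mul_apply
  simp only [hmul, Fin.sum_univ_three, Matrix.trace_fin_three, Pi.mul_apply, Pi.sub_apply]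
  ring

private lemma det_exp3_s17 (A : Matrix (Fin 3) (Fin 3) ℝ) :
    (exp A).det = Real.exp (Matrix.trace A) := by
  set h : ℝ → ℝ := fun t : ℝ => Real.exp (-(Matrix.trace A) * t) * (exp (t • A)).det with hhdef
  have hh : ∀ t, HasDerivAt h 0 t := by
    intro t
    have hinner : HasDerivAt (fun t : ℝ => -(Matrix.trace A) * t) (-(Matrix.trace A)) t := by
      simpa using (hasDerivAt_id t).const_mul (-(Matrix.trace A))
    have := hinner.exp.mul (det_hasDerivAt A t)
    convert this using 1
    · rfl
    · rfl
    · rfl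
    ring
  have hconst : h 1 = h 0 := by
    have : ∀ x y : ℝ, h x = h y := fun x y =>
      is_const_of_deriv_eq_zero (fun t => (hh t).differentiableAt) (fun t => (hh t).deriv) x y
    exact this 1 0
  simp only [hhdef, one_smul, zero_smul, exp_zero, Matrix.det_one, mul_zero, Real.exp_zero,
    mul_one, one_mul] at hconst
  have h2 : Real.exp (-(Matrix.trace A)) * (exp A).det = 1 := by
    simpa using hconst
  have h3 := congrArg (fun x => Real.exp (Matrix.trace A) * x) h2
  simp only [← mul_assoc, ← Real.exp_add, mul_one] at h3
  simpa using h3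

end gron

/-- For `D = diag d` with `dᵢ > 0`, the minimum over `Q ∈ SO(3)` and all real logarithms
`X` of `Qᵀ D` of `‖dev₃ (sym X)‖_F²` equals `‖dev₃ (log D)‖_F²`. -/
theorem min_dev_frobSq_sym_log_SO3 (d : Fin 3 → ℝ) (hdpos : ∀ i, 0 < d i) :
    IsLeast {r : ℝ | ∃ Q ∈ Matrix.orthogonalGroup (Fin 3) ℝ, Q.det = 1 ∧
        ∃ X : Matrix (Fin 3) (Fin 3) ℝ,
          NormedSpace.exp X = Qᵀ * Matrix.diagonal d ∧
          r = frobSqR (dev3 ((1 / 2 : ℝ) • (X + Xᵀ)))}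
      (frobSqR (dev3 (Matrix.diagonal (fun i => Real.log (d i))))) := by
  constructor
  · -- membership : take Q = 1 and X = log D
    refine ⟨1, one_mem _, Matrix.det_one, Matrix.diagonal (fun i => Real.log (d i)), ?_, ?_⟩
    · have hfn : (NormedSpace.exp fun i => Real.log (d i)) = d := by
        funext i
        rw [Pi.coe_exp, ← Real.exp_eq_exp_ℝ, Real.exp_log (hdpos i)]
      rw [Matrix.exp_diagonal, hfn, Matrix.transpose_one, one_mul]
    · congr 2
      rw [Matrix.diagonal_transpose, ← two_smul ℝ (Matrix.diagonal fun i => Real.log (d i)),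
        smul_smul]
      norm_num
  · -- lower bound
    rintro r ⟨Q, hQ, hdetQ, X, hexp, hr⟩
    letI : SeminormedRing (Matrix (Fin 3) (Fin 3) ℝ) := Matrix.linftyOpSemiNormedRing
    letI : NormedRing (Matrix (Fin 3) (Fin 3) ℝ) := Matrix.linftyOpNormedRing
    letI : NormedAlgebra ℝ (Matrix (Fin 3) (Fin 3) ℝ) := Matrix.linftyOpNormedAlgebra
    have hexp2 : NormedSpace.exp X = Qᵀ * Matrix.diagonal d := hexp
    -- symmetric part
    set S : Matrix (Fin 3) (Fin 3) ℝ := (1 / 2 : ℝ) • (X + Xᵀ) with hSdef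
    have hStr : Sᵀ = S := by
      rw [hSdef, Matrix.transpose_smul, Matrix.transpose_add, Matrix.transpose_transpose,
        add_comm]
    have hS : S.IsHermitian := by
      rw [Matrix.IsHermitian, Matrix.conjTranspose_eq_transpose_of_trivial, hStr]
    set lam : Fin 3 → ℝ := hS.eigenvalues with hlam
    set Λ : ℝ := max (max (lam 0) (lam 1)) (lam 2) with hΛ
    set μ : ℝ := min (min (lam 0) (lam 1)) (lam 2) with hμ
    have hlamle : ∀ i, lam i ≤ Λ := by
      intro i; fin_cases i
      · exact le_max_of_le_left (le_max_left _ _)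
      · exact le_max_of_le_left (le_max_right _ _)
      · exact le_max_right _ _
    have hlamge : ∀ i, μ ≤ lam i := by
      intro i; fin_cases i
      · exact min_le_of_left_le (min_le_left _ _)
      · exact min_le_of_left_le (min_le_right _ _)
      · exact min_le_right _ _
    -- quadratic form bounds for S
    have hquadS : ∀ u : Fin 3 → ℝ,
        μ * (u ⬝ᵥ u) ≤ (S *ᵥ u) ⬝ᵥ u ∧ (S *ᵥ u) ⬝ᵥ u ≤ Λ * (u ⬝ᵥ u) := by
      intro u
      obtain ⟨w, h1, h2⟩ := spec_repr hS u
      rw [h1, h2, Finset.mul_sum, Finset.mul_sum]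
      constructor
      · exact Finset.sum_le_sum fun i _ => mul_le_mul_of_nonneg_right (hlamge i) (sq_nonneg _)
      · exact Finset.sum_le_sum fun i _ => mul_le_mul_of_nonneg_right (hlamle i) (sq_nonneg _)
    -- quadratic form of X equals that of S
    have hXS : ∀ u : Fin 3 → ℝ, (X *ᵥ u) ⬝ᵥ u = (S *ᵥ u) ⬝ᵥ u := by
      intro u
      have htr : (Xᵀ *ᵥ u) ⬝ᵥ u = (X *ᵥ u) ⬝ᵥ u := by
        rw [mulVec_dot_s17, Matrix.transpose_transpose, dotProduct_comm]
      rw [hSdef, Matrix.smul_mulVec, Matrix.add_mulVec, smul_dotProduct,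
        add_dotProduct, htr, smul_eq_mul]
      ring
    have hqX : ∀ u : Fin 3 → ℝ, (X *ᵥ u) ⬝ᵥ u ≤ Λ * (u ⬝ᵥ u) := fun u =>
      (hXS u) ▸ (hquadS u).2
    have hqXneg : ∀ u : Fin 3 → ℝ, ((-X) *ᵥ u) ⬝ᵥ u ≤ (-μ) * (u ⬝ᵥ u) := by
      intro u
      rw [Matrix.neg_mulVec, neg_dotProduct]
      have := (hquadS u).1
      rw [← hXS u] at this
      linarith
    -- orthogonality of Q
    have hQQ : Q * Qᵀ = 1 := by
      have := (Unitary.mem_iff.mp hQ).2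
      rwa [Matrix.star_eq_conjTranspose, Matrix.conjTranspose_eq_transpose_of_trivial] at this
    -- computation of exp X *ᵥ basis vectors
    have hcomp : ∀ i : Fin 3,
        (NormedSpace.exp X *ᵥ Pi.single i 1) ⬝ᵥ (NormedSpace.exp X *ᵥ Pi.single i 1)
          = d i ^ 2 := by
      intro i
      rw [hexp2, ← Matrix.mulVec_mulVec, Matrix.diagonal_mulVec_single, mul_one, mulVec_dot_s17,
        Matrix.transpose_transpose, Matrix.mulVec_mulVec, hQQ, Matrix.one_mulVec]
      simp [dotProduct, Pi.single_apply, sq]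
    have hsingle : ∀ i : Fin 3, (Pi.single i 1 : Fin 3 → ℝ) ⬝ᵥ Pi.single i 1 = 1 := by
      intro i; simp [dotProduct, Pi.single_apply]
    -- upper bounds : log (d i) ≤ Λ
    have hlogle : ∀ i, Real.log (d i) ≤ Λ := by
      intro i
      have := gron X Λ hqX (Pi.single i 1)
      rw [hcomp i, hsingle i, mul_one] at this
      have hd2 : d i ≤ Real.exp Λ := by
        nlinarith [Real.exp_pos Λ, hdpos i, Real.exp_add Λ Λ, this,
          (show Real.exp (2*Λ) = Real.exp Λ * Real.exp Λ by rw [← Real.exp_add]; ring_nf)]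
      exact (Real.log_le_iff_le_exp (hdpos i)).2 hd2
    -- invertibility : exp (-X) * exp X = 1
    have hinv : NormedSpace.exp (-X) * NormedSpace.exp X = 1 := by
      rw [Matrix.exp_neg]
      apply Matrix.nonsing_inv_mul
      rw [det_exp3_s17]
      exact (Real.exp_pos _).ne'.isUnit
    -- lower bounds : μ ≤ log (d i)
    have hlogge : ∀ i, μ ≤ Real.log (d i) := by
      intro i
      have := gron (-X) (-μ) hqXneg (NormedSpace.exp X *ᵥ Pi.single i 1)
      rw [Matrix.mulVec_mulVec, hinv, Matrix.one_mulVec, hsingle i, hcomp i] at this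
      have hd2 : Real.exp μ ≤ d i := by
        nlinarith [Real.exp_pos μ, hdpos i, this,
          (show Real.exp (2*(-μ)) * Real.exp (2*μ) = 1 by rw [← Real.exp_add]; norm_num),
          (show Real.exp (2*μ) = Real.exp μ * Real.exp μ by rw [← Real.exp_add]; ring_nf),
          Real.exp_pos (2*(-μ)), Real.exp_pos (2*μ)]
      exact (Real.le_log_iff_exp_le (hdpos i)).2 hd2
    -- trace identity
    have htrX : Matrix.trace X = Real.log (d 0) + Real.log (d 1) + Real.log (d 2) := by
      have h1 : Real.exp (Matrix.trace X) = d 0 * d 1 * d 2 := by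
        rw [← det_exp3_s17, hexp2, Matrix.det_mul, Matrix.det_transpose, hdetQ, one_mul,
          Matrix.det_diagonal, Fin.prod_univ_three]
      have h2 := congrArg Real.log h1
      rw [Real.log_exp] at h2
      rw [h2, Real.log_mul (mul_pos (hdpos 0) (hdpos 1)).ne' (hdpos 2).ne',
        Real.log_mul (hdpos 0).ne' (hdpos 1).ne']
    have htrS : Matrix.trace S = Matrix.trace X := by
      rw [hSdef, Matrix.trace_smul, Matrix.trace_add, Matrix.trace_transpose, smul_eq_mul]
      ring
    have hsumlam : lam 0 + lam 1 + lam 2 = Matrix.trace S := by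
      rw [spec_trace hS, Fin.sum_univ_three]
    -- Frobenius norm of S via eigenvalues
    have hfrobS : frobSqR S = (lam 0)^2 + (lam 1)^2 + (lam 2)^2 := by
      have hsym : ∀ i j, S j i = S i j := fun i j => (congrFun (congrFun hStr j) i).symm
      have h1 : Matrix.trace (S * S) = frobSqR S := by
        simp only [Matrix.trace, Matrix.diag, Matrix.mul_apply, frobSq_eq, sq]
        exact Finset.sum_congr rfl fun i _ => Finset.sum_congr rfl fun j _ => by rw [hsym i j]
      rw [← h1, spec_frob hS, Fin.sum_univ_three]
    -- final computation
    rw [hr, frob_dev3, frob_dev3]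
    have htrdiag : Matrix.trace (Matrix.diagonal fun i => Real.log (d i)) =
        Real.log (d 0) + Real.log (d 1) + Real.log (d 2) := by
      rw [Matrix.trace_diagonal, Fin.sum_univ_three]
    have hfrobdiag : frobSqR (Matrix.diagonal fun i => Real.log (d i)) =
        (Real.log (d 0))^2 + (Real.log (d 1))^2 + (Real.log (d 2))^2 := by
      simp only [frobSq_eq, Fin.sum_univ_three, Matrix.diagonal_apply_eq]
      rw [Matrix.diagonal_apply_ne _ (by decide), Matrix.diagonal_apply_ne _ (by decide),
        Matrix.diagonal_apply_ne _ (by decide), Matrix.diagonal_apply_ne _ (by decide),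
        Matrix.diagonal_apply_ne _ (by decide), Matrix.diagonal_apply_ne _ (by decide)]
      ring
    rw [htrdiag, hfrobdiag, hfrobS, htrS, htrX]
    have hmaj : (Real.log (d 0))^2 + (Real.log (d 1))^2 + (Real.log (d 2))^2 ≤
        (lam 0)^2 + (lam 1)^2 + (lam 2)^2 := by
      apply scalar_maj (lam 0) (lam 1) (lam 2)
      · exact hlogle 0
      · exact hlogge 0
      · exact hlogle 1
      · exact hlogge 1
      · exact hlogle 2
      · exact hlogge 2
      · rw [hsumlam, htrS, htrX]
    linarith
end
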